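/- Let d be a positive integer, let a, b : Fin d → ℝ be Boolean vectors (each coordinate equal to 0 or 1), and define plane curves π, σ by π_i = (3i, 1 + 2a_i) and σ_i = (3i, 2 − 2b_i) for 1 ≤ i ≤ d. Then the discrete Fréchet distance d_F(π, σ) equals 1 if ⟨a, b⟩ = 0, and equals 3 otherwise. In particular, it is never strictly between 1 and 3, so the embedding is hard even for distinguishing Fréchet distance at most 1 from at least 3. -/

import Mathlib

/-- A traversal of two curves of length `d`: a sequence `f 1, …, f T` of index
pairs in `{1,…,d}²` with `f 1 = (1,1)`, `f T = (d,d)`, where at each step the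
first index advances, the second advances, or both advance together. -/
def IsTraversal (d T : ℕ) (f : ℕ → ℕ × ℕ) : Prop :=
  1 ≤ T ∧ f 1 = (1, 1) ∧ f T = (d, d) ∧
  (∀ t, 1 ≤ t → t ≤ T →
    1 ≤ (f t).1 ∧ (f t).1 ≤ d ∧ 1 ≤ (f t).2 ∧ (f t).2 ≤ d) ∧
  (∀ t, 1 ≤ t → t < T →
    f (t + 1) = ((f t).1 + 1, (f t).2) ∨
    f (t + 1) = ((f t).1, (f t).2 + 1) ∨
    f (t + 1) = ((f t).1 + 1, (f t).2 + 1))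

/-- The discrete Fréchet distance between two curves of length `d` (with
vertices `π 1, …, π d` and `σ 1, …, σ d`): the infimum over all traversals of
the maximum distance `‖π (f t).1 - σ (f t).2‖` along the traversal. -/
noncomputable def discreteFrechetDist (d : ℕ)
    (π σ : ℕ → EuclideanSpace ℝ (Fin 2)) : ℝ :=
  sInf { r | ∃ T f, ∃ hT : 1 ≤ T, IsTraversal d T f ∧
    r = (Finset.Icc 1 T).sup' (Finset.nonempty_Icc.mpr hT)
      (fun t => ‖π (f t).1 - σ (f t).2‖) }

lemma norm_two_aux (v : EuclideanSpace ℝ (Fin 2)) :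
    ‖v‖ = Real.sqrt ((v 0)^2 + (v 1)^2) := by
  rw [EuclideanSpace.norm_eq, Fin.sum_univ_two]
  simp [Real.norm_eq_abs, sq_abs]

/-- Discrete intermediate value theorem for a step function. -/
lemma ivt_aux (k : ℕ) : ∀ (T : ℕ), 1 ≤ T → ∀ (g : ℕ → ℕ), g 1 ≤ k → k ≤ g T →
    (∀ t, 1 ≤ t → t < T → g (t+1) = g t ∨ g (t+1) = g t + 1) →
    ∃ t, 1 ≤ t ∧ t ≤ T ∧ g t = k := by
  intro T
  induction T with
  | zero => omega
  | succ T ih =>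
    intro hT1 g h1 hT hs
    rcases Nat.eq_or_lt_of_le hT1 with h | h
    · refine ⟨1, le_refl _, by omega, ?_⟩
      have : g (T+1) = g 1 := by rw [← h]
      omega
    · by_cases hk : k ≤ g T
      · obtain ⟨t, ht1, ht2, ht3⟩ := ih (by omega) g h1 hk
          (fun t a1 a2 => hs t a1 (by omega))
        exact ⟨t, ht1, by omega, ht3⟩
      · have := hs T (by omega) (by omega)
        exact ⟨T+1, by omega, le_refl _, by omega⟩

/-- **The embedded curves have Fréchet distance exactly 1 or exactly 3.**
For Boolean vectors `a, b : Fin d → ℝ` and the plane curves with vertices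
`π i = (3i, 1 + 2 aᵢ)`, `σ i = (3i, 2 - 2 bᵢ)` for `1 ≤ i ≤ d`, the discrete
Fréchet distance equals `1` if `⟨a, b⟩ = 0` and equals `3` otherwise; in
particular it is never strictly between `1` and `3`. -/
theorem frechet_eq_one_or_three (d : ℕ) (hd : 0 < d) (a b : Fin d → ℝ)
    (ha : ∀ i, a i = 0 ∨ a i = 1) (hb : ∀ i, b i = 0 ∨ b i = 1)
    (π σ : ℕ → EuclideanSpace ℝ (Fin 2))
    (hπ : ∀ (i : ℕ) (h1 : 1 ≤ i) (h2 : i ≤ d),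
      π i = ![3 * (i : ℝ), 1 + 2 * a ⟨i - 1, by omega⟩])
    (hσ : ∀ (i : ℕ) (h1 : 1 ≤ i) (h2 : i ≤ d),
      σ i = ![3 * (i : ℝ), 2 - 2 * b ⟨i - 1, by omega⟩]) :
    ((∑ i, a i * b i) = 0 → discreteFrechetDist d π σ = 1) ∧
    ((∑ i, a i * b i) ≠ 0 → discreteFrechetDist d π σ = 3) ∧
    ¬(1 < discreteFrechetDist d π σ ∧ discreteFrechetDist d π σ < 3) := by
  -- general norm formula
  have hnorm : ∀ (i j : ℕ), 1 ≤ i → i ≤ d → 1 ≤ j → j ≤ d →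
      ∀ (hi : i - 1 < d) (hj : j - 1 < d),
      ‖π i - σ j‖ = Real.sqrt ((3*(i:ℝ) - 3*(j:ℝ))^2 +
        (2 * a ⟨i-1, hi⟩ + 2 * b ⟨j-1, hj⟩ - 1)^2) := by
    intro i j hi1 hi2 hj1 hj2 hi hj
    rw [norm_two_aux]
    rw [PiLp.sub_apply, PiLp.sub_apply, hπ i hi1 hi2, hσ j hj1 hj2]
    simp [PiLp.sub_apply]
    ring_nf
  -- diagonal distances
  have hdiag : ∀ (i : ℕ) (h1 : 1 ≤ i) (h2 : i ≤ d),
      (a ⟨i-1, by omega⟩ * b ⟨i-1, by omega⟩ = 0 ∧ ‖π i - σ i‖ = 1) ∨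
      (a ⟨i-1, by omega⟩ * b ⟨i-1, by omega⟩ ≠ 0 ∧ ‖π i - σ i‖ = 3) := by
    intro i h1 h2
    have hi : i - 1 < d := by omega
    rw [hnorm i i h1 h2 h1 h2 hi hi]
    have hsz : (3*(i:ℝ) - 3*(i:ℝ))^2 = 0 := by ring
    rw [hsz, zero_add, Real.sqrt_sq_eq_abs]
    rcases ha ⟨i-1, hi⟩ with hA | hA <;> rcases hb ⟨i-1, hi⟩ with hB | hB
    · left; rw [hA, hB]; norm_num
    · left; rw [hA, hB]; norm_num
    · left; rw [hA, hB]; norm_num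
    · right; rw [hA, hB]; norm_num
  -- off-diagonal lower bound
  have hoff : ∀ (i j : ℕ), 1 ≤ i → i ≤ d → 1 ≤ j → j ≤ d → i ≠ j →
      (3:ℝ) ≤ ‖π i - σ j‖ := by
    intro i j hi1 hi2 hj1 hj2 hij
    have hi : i - 1 < d := by omega
    have hj : j - 1 < d := by omega
    rw [hnorm i j hi1 hi2 hj1 hj2 hi hj]
    have h3 : (3:ℝ) ≤ |3*(i:ℝ) - 3*(j:ℝ)| := by
      rcases Nat.lt_or_ge i j with h | h
      · have : (i:ℝ) + 1 ≤ j := by exact_mod_cast h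
        rw [abs_of_nonpos (by linarith)]; linarith
      · have hji : j < i := by omega
        have : (j:ℝ) + 1 ≤ i := by exact_mod_cast hji
        rw [abs_of_nonneg (by linarith)]; linarith
    calc (3:ℝ) ≤ |3*(i:ℝ) - 3*(j:ℝ)| := h3
      _ = Real.sqrt ((3*(i:ℝ) - 3*(j:ℝ))^2) := (Real.sqrt_sq_eq_abs _).symm
      _ ≤ _ := Real.sqrt_le_sqrt (by nlinarith [sq_nonneg (2 * a ⟨i-1, hi⟩ + 2 * b ⟨j-1, hj⟩ - 1)])
  -- every vertex pair distance (valid ones) is ≥ 1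
  have hge1 : ∀ (i j : ℕ), 1 ≤ i → i ≤ d → 1 ≤ j → j ≤ d → (1:ℝ) ≤ ‖π i - σ j‖ := by
    intro i j hi1 hi2 hj1 hj2
    by_cases hij : i = j
    · subst hij
      rcases hdiag i hi1 hi2 with ⟨_, h⟩ | ⟨_, h⟩ <;> rw [h] <;> norm_num
    · linarith [hoff i j hi1 hi2 hj1 hj2 hij]
  -- the diagonal traversal
  set S := { r | ∃ T f, ∃ hT : 1 ≤ T, IsTraversal d T f ∧
    r = (Finset.Icc 1 T).sup' (Finset.nonempty_Icc.mpr hT)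
      (fun t => ‖π (f t).1 - σ (f t).2‖) } with hS
  have hdiagT : IsTraversal d d (fun t => (t, t)) := by
    refine ⟨hd, rfl, rfl, ?_, ?_⟩
    · intro t h1 h2; exact ⟨h1, h2, h1, h2⟩
    · intro t h1 h2; right; right; rfl
  have hmem : ((Finset.Icc 1 d).sup' (Finset.nonempty_Icc.mpr hd)
      (fun t => ‖π t - σ t‖)) ∈ S := ⟨d, fun t => (t, t), hd, hdiagT, rfl⟩
  have hlb1 : ∀ r ∈ S, (1:ℝ) ≤ r := by
    rintro r ⟨T, f, hT, ⟨_, hf1, _, hbnd, _⟩, rfl⟩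
    have h1T : 1 ∈ Finset.Icc 1 T := Finset.mem_Icc.mpr ⟨le_refl _, hT⟩
    calc (1:ℝ) ≤ ‖π (f 1).1 - σ (f 1).2‖ := by
          rw [hf1]; exact hge1 1 1 (le_refl _) hd (le_refl _) hd
      _ ≤ _ := Finset.le_sup' (fun t => ‖π (f t).1 - σ (f t).2‖) h1T
  have hbdd : BddBelow S := ⟨1, hlb1⟩
  have hSne : S.Nonempty := ⟨_, hmem⟩
  -- Part 1
  have part1 : (∑ i, a i * b i) = 0 → discreteFrechetDist d π σ = 1 := by
    intro hsum
    have hz : ∀ k : Fin d, a k * b k = 0 := by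
      intro k
      have hnn : ∀ i ∈ Finset.univ, (0:ℝ) ≤ a i * b i := by
        intro i _
        rcases ha i with h | h <;> rcases hb i with h' | h' <;> rw [h, h'] <;> norm_num
      exact (Finset.sum_eq_zero_iff_of_nonneg hnn).mp hsum k (Finset.mem_univ k)
    have hdiag1 : ∀ (i : ℕ), 1 ≤ i → i ≤ d → ‖π i - σ i‖ = 1 := by
      intro i h1 h2
      rcases hdiag i h1 h2 with ⟨_, h⟩ | ⟨h, _⟩
      · exact h
      · exact absurd (hz _) h
    have hsup1 : ((Finset.Icc 1 d).sup' (Finset.nonempty_Icc.mpr hd)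
        (fun t => ‖π t - σ t‖)) = 1 := by
      apply le_antisymm
      · apply Finset.sup'_le
        intro t ht
        obtain ⟨ht1, ht2⟩ := Finset.mem_Icc.mp ht
        rw [hdiag1 t ht1 ht2]
      · calc (1:ℝ) = ‖π 1 - σ 1‖ := (hdiag1 1 (le_refl _) hd).symm
          _ ≤ _ := Finset.le_sup' (fun t => ‖π t - σ t‖)
                (Finset.mem_Icc.mpr ⟨le_refl _, hd⟩)
    have h1S : (1:ℝ) ∈ S := hsup1 ▸ hmem
    rw [discreteFrechetDist, ← hS]
    exact le_antisymm (csInf_le hbdd h1S) (le_csInf hSne hlb1)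
  -- Part 2
  have part2 : (∑ i, a i * b i) ≠ 0 → discreteFrechetDist d π σ = 3 := by
    intro hsum
    obtain ⟨k, hk⟩ : ∃ k : Fin d, a k * b k ≠ 0 := by
      by_contra h
      push_neg at h
      exact hsum (Finset.sum_eq_zero (fun i _ => h i))
    set i : ℕ := (k:ℕ) + 1 with hi_def
    have hi1 : 1 ≤ i := by omega
    have hi2 : i ≤ d := by have := k.isLt; omega
    have hik : (⟨i - 1, by omega⟩ : Fin d) = k := by
      apply Fin.ext; simp [hi_def]
    have hdiag3 : ‖π i - σ i‖ = 3 := by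
      rcases hdiag i hi1 hi2 with ⟨h, _⟩ | ⟨_, h⟩
      · rw [hik] at h; exact absurd h hk
      · exact h
    have hdle3 : ∀ (t : ℕ), 1 ≤ t → t ≤ d → ‖π t - σ t‖ ≤ 3 := by
      intro t h1 h2
      rcases hdiag t h1 h2 with ⟨_, h⟩ | ⟨_, h⟩ <;> rw [h] <;> norm_num
    have hsup3 : ((Finset.Icc 1 d).sup' (Finset.nonempty_Icc.mpr hd)
        (fun t => ‖π t - σ t‖)) = 3 := by
      apply le_antisymm
      · apply Finset.sup'_le
        intro t ht
        obtain ⟨ht1, ht2⟩ := Finset.mem_Icc.mp ht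
        exact hdle3 t ht1 ht2
      · calc (3:ℝ) = ‖π i - σ i‖ := hdiag3.symm
          _ ≤ _ := Finset.le_sup' (fun t => ‖π t - σ t‖)
                (Finset.mem_Icc.mpr ⟨hi1, hi2⟩)
    have h3S : (3:ℝ) ∈ S := hsup3 ▸ hmem
    have hlb3 : ∀ r ∈ S, (3:ℝ) ≤ r := by
      rintro r ⟨T, f, hT, ⟨hT1, hf1, hfT, hbnd, hstep⟩, rfl⟩
      obtain ⟨t, ht1, ht2, ht3⟩ := ivt_aux i T hT (fun t => (f t).1)
        (by show (f 1).1 ≤ i; rw [hf1]; exact hi1)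
        (by show i ≤ (f T).1; rw [hfT]; exact hi2)
        (by
          intro t h1 h2
          show (f (t+1)).1 = (f t).1 ∨ (f (t+1)).1 = (f t).1 + 1
          rcases hstep t h1 h2 with h | h | h <;> simp [h])
      have htmem : t ∈ Finset.Icc 1 T := Finset.mem_Icc.mpr ⟨ht1, ht2⟩
      have hb2 := hbnd t ht1 ht2
      have key : (3:ℝ) ≤ ‖π (f t).1 - σ (f t).2‖ := by
        rw [ht3]
        by_cases hcase : (f t).2 = i
        · rw [hcase, hdiag3]
        · exact hoff i (f t).2 hi1 hi2 hb2.2.2.1 hb2.2.2.2 (fun h => hcase h.symm)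
      calc (3:ℝ) ≤ ‖π (f t).1 - σ (f t).2‖ := key
        _ ≤ _ := Finset.le_sup' (fun t => ‖π (f t).1 - σ (f t).2‖) htmem
    rw [discreteFrechetDist, ← hS]
    exact le_antisymm (csInf_le hbdd h3S) (le_csInf hSne hlb3)
  refine ⟨part1, part2, ?_⟩
  by_cases hsum : (∑ i, a i * b i) = 0
  · rw [part1 hsum]; rintro ⟨h, _⟩; linarith
  · rw [part2 hsum]; rintro ⟨_, h⟩; linarith
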